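/- With f(k) = (1/4) · (1/(k+1)) · (dt - 2k)(dt - 2k + 1)/(dn/2 - dt + k + 1), for any k1 > k2 in the range max{0, dt - dn/2} ≤ k ≤ dt/2, the ratio f(k1)/f(k2) is at most (k2 + 1)/(k1 + 1). -/

import Mathlib

/-- With `f(k) = (1/4)·(1/(k+1))·(dt-2k)(dt-2k+1)/(dn/2-dt+k+1)`, for any
`k1 > k2` in the range `max{0, dt - dn/2} ≤ k ≤ dt/2`, the ratio `f(k1)/f(k2)`
is at most `(k2+1)/(k1+1)`. -/
theorem stmt5 (d t n : ℕ) (hd : 0 < d) (ht : 0 < t) (htn : t ≤ n)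
    (heven : Even (d * n)) (k1 k2 : ℝ)
    (hlow : max 0 ((d * t : ℝ) - (d * n : ℝ) / 2) ≤ k2)
    (hhigh : k1 ≤ (d * t : ℝ) / 2) (hlt : k2 < k1) :
    (1 / 4 * (1 / (k1 + 1)) *
        (((d * t : ℝ) - 2 * k1) * ((d * t : ℝ) - 2 * k1 + 1)) /
        ((d * n : ℝ) / 2 - (d * t : ℝ) + k1 + 1)) /
      (1 / 4 * (1 / (k2 + 1)) *
        (((d * t : ℝ) - 2 * k2) * ((d * t : ℝ) - 2 * k2 + 1)) /
        ((d * n : ℝ) / 2 - (d * t : ℝ) + k2 + 1)) ≤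
      (k2 + 1) / (k1 + 1) := by
  set a : ℝ := (d * t : ℝ) with ha
  set b : ℝ := (d * n : ℝ) / 2 with hb
  have hk2 : (0:ℝ) ≤ k2 := le_trans (le_max_left _ _) hlow
  have hk2b : a - b ≤ k2 := le_trans (le_max_right _ _) hlow
  have h1 : 0 < k1 + 1 := by linarith
  have h2 : 0 < k2 + 1 := by linarith
  have hD2 : 0 < b - a + k2 + 1 := by linarith
  have hD1 : 0 < b - a + k1 + 1 := by linarith
  have hN1a : 0 ≤ a - 2 * k1 := by linarith
  have hN1b : 0 ≤ a - 2 * k1 + 1 := by linarith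
  have hN2a : 0 < a - 2 * k2 := by linarith
  have hN2b : 0 < a - 2 * k2 + 1 := by linarith
  have hY : 0 < 1 / 4 * (1 / (k2 + 1)) * ((a - 2 * k2) * (a - 2 * k2 + 1)) /
      (b - a + k2 + 1) := by positivity
  rw [div_le_iff₀ hY, div_le_iff₀ hD1]
  have key : (a - 2*k1) * (a - 2*k1 + 1) * (b - a + k2 + 1) ≤
      (a - 2*k2) * (a - 2*k2 + 1) * (b - a + k1 + 1) := by
    nlinarith [mul_nonneg hN1a hN1b, mul_nonneg (mul_nonneg hN1a hN1b) (le_of_lt (sub_pos.mpr hlt)),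
      mul_nonneg hN1a (le_of_lt (sub_pos.mpr hlt)), mul_nonneg hN1b (le_of_lt (sub_pos.mpr hlt)),
      mul_pos hN2a hN2b, mul_nonneg (le_of_lt hD2) (le_of_lt (sub_pos.mpr hlt))]
  have hk1ne : (k1+1) ≠ 0 := ne_of_gt h1
  have hk2ne : (k2+1) ≠ 0 := ne_of_gt h2
  have hD2ne : (b - a + k2 + 1) ≠ 0 := ne_of_gt hD2
  field_simp
  nlinarith [mul_le_mul_of_nonneg_left key (le_of_lt h2), mul_pos h1 h2,
    mul_nonneg (mul_nonneg hk2 (le_of_lt hD2)) (mul_nonneg hN1a hN1b)]
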